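/- Let H be a closed subgroup of GL₂(ℤ₂). If H surjects onto GL₂(ℤ/8ℤ), then H = GL₂(ℤ₂). -/

import Mathlib

open Matrix

private abbrev M2 := Matrix (Fin 2) (Fin 2) ℤ_[2]

private lemma norm_two_Z2 : ‖(2:ℤ_[2])‖ = 2⁻¹ := by
  have := PadicInt.norm_p (p := 2)
  simpa using this

/-- Convergence criterion: matrices congruent mod `2^(n+3)` converge. -/
private lemma tendsto_aux (f : ℕ → M2) (L : M2)
    (hf : ∀ n, ∃ D : M2, f n = L + (2:ℤ_[2])^(n+3) • D) :
    Filter.Tendsto f Filter.atTop (nhds L) := by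
  refine tendsto_pi_nhds.2 fun i => tendsto_pi_nhds.2 fun j => ?_
  rw [tendsto_iff_dist_tendsto_zero]
  refine squeeze_zero (fun n => dist_nonneg) (g := fun n => (2⁻¹:ℝ)^n) ?_
    (tendsto_pow_atTop_nhds_zero_of_lt_one (by norm_num) (by norm_num))
  · intro n
    obtain ⟨D, hD⟩ := hf n
    have hsub : f n i j - L i j = (2:ℤ_[2])^(n+3) * D i j := by
      rw [hD]; simp [Matrix.add_apply, Matrix.smul_apply, smul_eq_mul]
    rw [dist_eq_norm, hsub, norm_mul, norm_pow, norm_two_Z2]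
    calc (2⁻¹:ℝ)^(n+3) * ‖D i j‖ ≤ (2⁻¹:ℝ)^(n+3) * 1 := by
          refine mul_le_mul_of_nonneg_left (PadicInt.norm_le_one _) (by positivity)
      _ = (2⁻¹:ℝ)^(n+3) := mul_one _
      _ ≤ (2⁻¹:ℝ)^n := pow_le_pow_of_le_one (by norm_num) (by norm_num) (by omega)

/-- The key induction: approximation mod 8 bootstraps to approximation mod `2^(n+3)`. -/
private lemma approx_aux (H : Subgroup (GL (Fin 2) ℤ_[2]))
    (base : ∀ g : GL (Fin 2) ℤ_[2], ∃ h ∈ H, ∃ C : M2,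
      (h : M2) = (g : M2) + (2:ℤ_[2])^3 • C) :
    ∀ n, ∀ g : GL (Fin 2) ℤ_[2], ∃ h ∈ H, ∃ C : M2,
      (h : M2) = (g : M2) + (2:ℤ_[2])^(n+3) • C := by
  intro n
  induction n with
  | zero => simpa using base
  | succ n ih =>
    intro g
    obtain ⟨h, hH, C, hC⟩ := ih g
    set A : M2 := -(((h⁻¹ : GL (Fin 2) ℤ_[2]) : M2) * C) with hA
    -- the matrix 1 + 2^(n+2) • A is invertible
    set V : M2 := 1 + (2:ℤ_[2])^(n+2) • A with hV
    have hmap : V.map (PadicInt.toZModPow 1) = 1 := by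
      have h20 : (PadicInt.toZModPow (p := 2) 1) ((2:ℤ_[2])^(n+2)) = 0 := by
        rw [map_pow, map_ofNat]
        have h2 : (2 : ZMod 2) = 0 := by decide
        rw [h2]
        exact zero_pow (by omega)
      have hone : V.map (PadicInt.toZModPow 1) = (1 : M2).map (PadicInt.toZModPow 1) := by
        ext i j
        simp only [Matrix.map_apply, hV, Matrix.add_apply, Matrix.smul_apply, smul_eq_mul,
          map_add, _root_.map_mul, h20, zero_mul, add_zero]
      rw [hone, Matrix.map_one _ (map_zero _) (map_one _)]
    have hdet : IsUnit V.det := by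
      by_contra hu
      have hmem : V.det ∈ RingHom.ker (PadicInt.toZModPow (p := 2) 1) := by
        rw [PadicInt.ker_toZModPow, pow_one]
        have : V.det ∈ IsLocalRing.maximalIdeal ℤ_[2] :=
          (IsLocalRing.mem_maximalIdeal _).2 hu
        rwa [PadicInt.maximalIdeal_eq_span_p] at this
      rw [RingHom.mem_ker, RingHom.map_det, RingHom.mapMatrix_apply, hmap,
        Matrix.det_one] at hmem
      exact (by decide : (1 : ZMod 2) ≠ 0) hmem
    have hVunit : IsUnit V := (Matrix.isUnit_iff_isUnit_det V).2 hdet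
    obtain ⟨k, kH, B, hB⟩ := ih hVunit.unit
    rw [hVunit.unit_spec] at hB
    -- key computation : k * k ≡ 1 + t • A mod 2^(n+4)
    set E : M2 := B + (2:ℤ_[2])^n • (A*A) + (2*(2:ℤ_[2])^n) • (A*B)
        + (2*(2:ℤ_[2])^n) • (B*A) + (4*(2:ℤ_[2])^n) • (B*B) with hE
    have hkk : ((k*k : GL (Fin 2) ℤ_[2]) : M2)
        = (1 + (2:ℤ_[2])^(n+3) • A) + (2:ℤ_[2])^(n+4) • E := by
      have e2 : (2:ℤ_[2])^(n+2) = 4 * (2:ℤ_[2])^n := by ring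
      have e3 : (2:ℤ_[2])^(n+3) = 8 * (2:ℤ_[2])^n := by ring
      have e4 : (2:ℤ_[2])^(n+4) = 16 * (2:ℤ_[2])^n := by ring
      rw [Units.val_mul, hB, hV, e2, e3, e4, hE]
      set e := (2:ℤ_[2])^n
      show (1 + (4*e)•A + (8*e)•B) * (1 + (4*e)•A + (8*e)•B)
        = (1 + (8*e)•A) + (16*e) • (B + e•(A*A) + (2*e)•(A*B) + (2*e)•(B*A) + (4*e)•(B*B))
      simp only [add_mul, mul_add, smul_mul_assoc, mul_smul_comm, one_mul, mul_one, smul_smul]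
      module
    refine ⟨h * (k * k), mul_mem hH (mul_mem kH kH), (h : M2) * E, ?_⟩
    have hhA : (h : M2) * A = -C := by
      rw [hA, mul_neg, ← mul_assoc, Units.mul_inv, one_mul]
    calc ((h * (k*k) : GL (Fin 2) ℤ_[2]) : M2)
        = (h : M2) * ((k*k : GL (Fin 2) ℤ_[2]) : M2) := Units.val_mul _ _
      _ = (h : M2) + (2:ℤ_[2])^(n+3) • ((h:M2) * A) + (2:ℤ_[2])^(n+4) • ((h:M2) * E) := by
          rw [hkk]; simp only [mul_add, mul_one, mul_smul_comm]
      _ = (g : M2) + (2:ℤ_[2])^(n+1+3) • ((h:M2) * E) := by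
          rw [hhA]
          set X := (h : M2) * E with hX
          rw [hC]
          show ((g:M2) + (2:ℤ_[2])^(n+3) • C) + (2:ℤ_[2])^(n+3) • (-C)
              + (2:ℤ_[2])^(n+4) • X
            = (g:M2) + (2:ℤ_[2])^(n+4) • X
          module
  
/-- A closed subgroup of `GL₂(ℤ₂)` that surjects onto `GL₂(ℤ/8ℤ)` is all of `GL₂(ℤ₂)`. -/
theorem closed_subgroup_GL2_Z2_of_mod8 (H : Subgroup (GL (Fin 2) ℤ_[2]))
    (hclosed : IsClosed (H : Set (GL (Fin 2) ℤ_[2])))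
    (hsurj : Subgroup.map
        (Matrix.GeneralLinearGroup.map (PadicInt.toZModPow 3 : ℤ_[2] →+* ZMod (2 ^ 3))) H
      = ⊤) :
    H = ⊤ := by
  -- base case : approximation mod 8
  have base : ∀ g : GL (Fin 2) ℤ_[2], ∃ h ∈ H, ∃ C : M2,
      (h : M2) = (g : M2) + (2:ℤ_[2])^3 • C := by
    intro g
    have hg : (Matrix.GeneralLinearGroup.map
        (PadicInt.toZModPow 3 : ℤ_[2] →+* ZMod (2^3)) g) ∈ Subgroup.map
        (Matrix.GeneralLinearGroup.map (PadicInt.toZModPow 3 : ℤ_[2] →+* ZMod (2^3))) H := by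
      rw [hsurj]; trivial
    obtain ⟨h, hH, hmap⟩ := hg
    have hent : ∀ i j, (2:ℤ_[2])^3 ∣ ((h : M2) i j - (g : M2) i j) := by
      intro i j
      have heq := congrArg (fun u : GL (Fin 2) (ZMod (2^3)) =>
        (u : Matrix (Fin 2) (Fin 2) (ZMod (2^3))) i j) hmap
      simp [Matrix.GeneralLinearGroup.map, Matrix.map_apply] at heq
      have hker : (h : M2) i j - (g : M2) i j ∈ RingHom.ker (PadicInt.toZModPow (p:=2) 3) := by
        rw [RingHom.mem_ker, map_sub, sub_eq_zero]
        exact heq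
      rw [PadicInt.ker_toZModPow, Ideal.mem_span_singleton] at hker
      have : ((2:ℕ) : ℤ_[2]) = 2 := by norm_cast
      rwa [this] at hker
    refine ⟨h, hH, fun i j => (hent i j).choose, ?_⟩
    ext i j
    have := (hent i j).choose_spec
    simp only [Matrix.add_apply, Matrix.smul_apply, smul_eq_mul]
    change (h : M2) i j = (g : M2) i j + (2:ℤ_[2])^3 * (hent i j).choose
    linear_combination this
  -- bootstrap to all levels and conclude by density
  have key := approx_aux H base
  rw [eq_top_iff]
  intro g _
  choose h hmem C hC using fun n => key n g
  have t1 : Filter.Tendsto (fun n => ((h n : GL (Fin 2) ℤ_[2]) : M2)) Filter.atTop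
      (nhds (g : M2)) := tendsto_aux _ _ (fun n => ⟨C n, hC n⟩)
  have t2 : Filter.Tendsto (fun n => (((h n)⁻¹ : GL (Fin 2) ℤ_[2]) : M2)) Filter.atTop
      (nhds ((g⁻¹ : GL (Fin 2) ℤ_[2]) : M2)) := by
    refine tendsto_aux _ _ (fun n => ⟨-(((h n)⁻¹ : GL (Fin 2) ℤ_[2]) : M2) * C n
      * ((g⁻¹ : GL (Fin 2) ℤ_[2]) : M2), ?_⟩)
    have e1 : (((h n)⁻¹ : GL (Fin 2) ℤ_[2]) : M2) * (h n : M2) = 1 := Units.inv_mul _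
    have e2 : (g : M2) * ((g⁻¹ : GL (Fin 2) ℤ_[2]) : M2) = 1 := Units.mul_inv _
    calc (((h n)⁻¹ : GL (Fin 2) ℤ_[2]) : M2)
        = (((h n)⁻¹ : GL (Fin 2) ℤ_[2]) : M2) * ((g : M2) * ((g⁻¹ : GL (Fin 2) ℤ_[2]) : M2)) := by
          rw [e2, mul_one]
      _ = (((h n)⁻¹ : GL (Fin 2) ℤ_[2]) : M2) * (((h n : M2) - (2:ℤ_[2])^(n+3) • C n)
            * ((g⁻¹ : GL (Fin 2) ℤ_[2]) : M2)) := by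
          rw [eq_sub_iff_add_eq.2 (hC n).symm]
      _ = ((g⁻¹ : GL (Fin 2) ℤ_[2]) : M2) + (2:ℤ_[2])^(n+3)
            • (-(((h n)⁻¹ : GL (Fin 2) ℤ_[2]) : M2) * C n * ((g⁻¹ : GL (Fin 2) ℤ_[2]) : M2)) := by
          rw [sub_mul, mul_sub, ← mul_assoc, e1, one_mul, smul_mul_assoc, mul_smul_comm]
          simp only [neg_mul, smul_neg, mul_assoc]
          abel
  have htend : Filter.Tendsto h Filter.atTop (nhds g) := by
    rw [Units.isInducing_embedProduct.tendsto_nhds_iff]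
    exact Filter.Tendsto.prodMk_nhds t1 ((MulOpposite.continuous_op.tendsto _).comp t2)
  have : g ∈ closure (H : Set (GL (Fin 2) ℤ_[2])) :=
    mem_closure_of_tendsto htend (Filter.Eventually.of_forall hmem)
  rwa [hclosed.closure_eq] at this
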